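/- Let B_1,…,B_n be p×m complex matrices with F_0(z) = ∑_{j=1}^n z^{-j} B_j satisfying F_0(z) F_0(z)* = I_p for all z on the unit circle, and let H_0 be the associated np×nm block Hankel matrix. Then I_{np} − H_0 H_0* is positive semidefinite, satisfies I_{np} − H_0 H_0* ≤ I_{np}, and all of its entries in the first p rows and in the first p columns vanish; that is, I_{np} − H_0 H_0* = diag(0_{p×p}, Δ) for some (np−p)×(np−p) positive semidefinite matrix Δ with Δ ≤ I. -/

import Mathlib

open Matrix Finset ComplexOrder

lemma circle_infinite : Set.Infinite {z : ℂ | ‖z‖ = 1} := by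
  haveI : Infinite (Set.Ioc (-Real.pi) Real.pi) :=
    Set.Ioc.infinite (by linarith [Real.pi_pos])
  haveI : Infinite Circle := Infinite.of_injective _ Circle.argEquiv.symm.injective
  exact Set.infinite_of_injective_forall_mem (f := fun c : Circle => (c : ℂ))
    Circle.coe_injective (fun c => by simp [Circle.norm_coe])

lemma key_fourier (p m n : ℕ) (B : ℕ → Matrix (Fin p) (Fin m) ℂ)
    (hcoiso : ∀ z : ℂ, ‖z‖ = 1 →
      (∑ j ∈ Finset.range n, z ^ (-(j + 1 : ℤ)) • B (j + 1)) *
        (∑ j ∈ Finset.range n, z ^ (-(j + 1 : ℤ)) • B (j + 1))ᴴ = 1)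
    (d : ℕ) (hd : d < n) (a c : Fin p) :
    ∑ s ∈ Finset.range (n - d), (B (s+1) * (B (s+1+d))ᴴ) a c
      = if d = 0 then (1 : Matrix (Fin p) (Fin p) ℂ) a c else 0 := by
  set Q : Polynomial ℂ :=
    (∑ j ∈ Finset.range n, ∑ k ∈ Finset.range n,
      Polynomial.monomial ((n-1-j)+k) ((B (j+1) * (B (k+1))ᴴ) a c))
      - Polynomial.monomial (n-1) ((1 : Matrix (Fin p) (Fin p) ℂ) a c) with hQ
  have hroot : ∀ z : ℂ, ‖z‖ = 1 → Q.eval z = 0 := by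
    intro z hz
    have hz0 : z ≠ 0 := by intro h; rw [h] at hz; simp at hz
    have hns : Complex.normSq z = 1 := by
      rw [Complex.normSq_eq_norm_sq, hz]; norm_num
    have hconj : star z = z⁻¹ := by
      rw [Complex.star_def, Complex.inv_def, hns]; simp
    have h := congrFun (congrFun (hcoiso z hz) a) c
    simp only [Matrix.sum_mul, Matrix.conjTranspose_sum, Matrix.mul_sum,
      Matrix.conjTranspose_smul, Matrix.smul_mul, Matrix.mul_smul, Matrix.sum_apply,
      Matrix.smul_apply, smul_eq_mul, Finset.mul_sum] at h
    have hterm : ∀ k ∈ Finset.range n, ∀ j ∈ Finset.range n,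
        (B (j+1) * (B (k+1))ᴴ) a c * z ^ ((n-1-j)+k)
          = (star (z ^ (-(k+1 : ℤ))) * (z ^ (-(j+1 : ℤ))
              * (B (j+1) * (B (k+1))ᴴ) a c)) * z ^ (n-1) := by
      intro k hk j hj
      rw [Finset.mem_range] at hj
      have hstar : star (z ^ (-(k+1 : ℤ))) = z ^ ((k : ℤ)+1) := by
        rw [star_zpow₀, hconj, _root_.inv_zpow, ← _root_.zpow_neg]; norm_num
      have hcomb : z ^ ((k : ℤ)+1) * z ^ (-(j+1 : ℤ)) * z ^ (((n-1 : ℕ)) : ℤ)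
          = z ^ ((((n-1-j)+k : ℕ)) : ℤ) := by
        rw [← zpow_add₀ hz0, ← zpow_add₀ hz0]
        congr 1
        omega
      rw [hstar, ← zpow_natCast z ((n-1-j)+k), ← zpow_natCast z (n-1), ← hcomb]
      ring
    rw [hQ]
    simp only [Polynomial.eval_sub, Polynomial.eval_finset_sum, Polynomial.eval_monomial]
    rw [Finset.sum_comm]
    have h3 : ∑ k ∈ Finset.range n, ∑ j ∈ Finset.range n,
        (B (j+1) * (B (k+1))ᴴ) a c * z ^ ((n-1-j)+k)
        = (1 : Matrix (Fin p) (Fin p) ℂ) a c * z ^ (n-1) := by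
      rw [← h, Finset.sum_mul]
      refine Finset.sum_congr rfl fun k hk => ?_
      rw [Finset.sum_mul]
      exact Finset.sum_congr rfl fun j hj => hterm k hk j hj
    rw [h3, sub_self]
  have hQ0 : Q = 0 :=
    Polynomial.eq_zero_of_infinite_isRoot Q (circle_infinite.mono fun z hz => hroot z hz)
  have hco := congrArg (fun q => Polynomial.coeff q ((n-1)+d)) hQ0
  simp only [hQ, Polynomial.coeff_sub, Polynomial.finset_sum_coeff,
    Polynomial.coeff_monomial, Polynomial.coeff_zero] at hco
  -- now massage hco
  have hco2 : ∑ j ∈ Finset.range n, ∑ k ∈ Finset.range n,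
      (if k = j + d then (B (j+1) * (B (k+1))ᴴ) a c else 0)
      = (if d = 0 then (1 : Matrix (Fin p) (Fin p) ℂ) a c else 0) := by
    rw [← sub_eq_zero, ← hco]
    congr 1
    · refine Finset.sum_congr rfl fun j hj => Finset.sum_congr rfl fun k hk => ?_
      rw [Finset.mem_range] at hj hk
      congr 1
      simp only [eq_iff_iff]
      constructor <;> (intro hyp; omega)
    · congr 1
      simp only [eq_iff_iff]
      constructor <;> (intro hyp; omega)
  rw [← hco2]
  have h4 : ∀ j ∈ Finset.range n,
      ∑ k ∈ Finset.range n, (if k = j + d then (B (j+1) * (B (k+1))ᴴ) a c else 0)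
        = if j + d ∈ Finset.range n then (B (j+1) * (B (j+d+1))ᴴ) a c else 0 :=
    fun j _ => Finset.sum_ite_eq' (Finset.range n) (j+d) _
  rw [Finset.sum_congr rfl h4]
  rw [← Finset.sum_subset (Finset.range_subset_range.mpr (by omega : n - d ≤ n))
    (fun j _ hj => by
      rw [Finset.mem_range] at hj
      rw [if_neg]
      simp only [Finset.mem_range]
      omega)]
  refine Finset.sum_congr rfl fun s hs => ?_
  rw [Finset.mem_range] at hs
  rw [if_pos (by simp only [Finset.mem_range]; omega), show s+d+1 = s+1+d from by omega]

/-- If `F₀(z) = ∑_{j=1}^n z^{-j} B_j` is co-isometric on the unit circle,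
then `I - H₀ H₀ᴴ` is positive semidefinite, bounded above by `I` in the Loewner
order, and its entries vanish on the first `p` rows and first `p` columns
(i.e. it has the form `diag(0_{p×p}, Δ)` with `0 ≤ Δ ≤ I`). -/
theorem fir_coisometry_hankel_structure
    (p m n : ℕ) (B : ℕ → Matrix (Fin p) (Fin m) ℂ)
    (H₀ : Matrix (Fin n × Fin p) (Fin n × Fin m) ℂ)
    (hH₀ : ∀ (i j : Fin n) (a : Fin p) (b : Fin m),
      H₀ (i, a) (j, b) = if i.val + j.val + 1 ≤ n then B (i.val + j.val + 1) a b else 0)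
    (hcoiso : ∀ z : ℂ, ‖z‖ = 1 →
      (∑ j ∈ Finset.range n, z ^ (-(j + 1 : ℤ)) • B (j + 1)) *
        (∑ j ∈ Finset.range n, z ^ (-(j + 1 : ℤ)) • B (j + 1))ᴴ = 1) :
    (1 - H₀ * H₀ᴴ).PosSemidef ∧
    (1 - (1 - H₀ * H₀ᴴ)).PosSemidef ∧
    (∀ (j k : Fin n) (b c : Fin p), (j.val = 0 ∨ k.val = 0) →
      ((1 - H₀ * H₀ᴴ : Matrix (Fin n × Fin p) (Fin n × Fin p) ℂ) (j, b)) (k, c) = 0) := by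
  set G : Matrix (Fin n × Fin p) (Fin n × Fin m) ℂ :=
    fun x y => if y.1.val < x.1.val then B (x.1.val - y.1.val) x.2 y.2 else 0 with hG
  have entryHH : ∀ (i k : Fin n) (a c : Fin p),
      (H₀ * H₀ᴴ) (i, a) (k, c) = ∑ j ∈ Finset.range n,
        if (i.val + j + 1 ≤ n ∧ k.val + j + 1 ≤ n)
          then (B (i.val + j + 1) * (B (k.val + j + 1))ᴴ) a c else 0 := by
    intro i k a c
    rw [Matrix.mul_apply, Fintype.sum_prod_type,
      ← Fin.sum_univ_eq_sum_range (fun j => if (i.val + j + 1 ≤ n ∧ k.val + j + 1 ≤ n)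
        then (B (i.val + j + 1) * (B (k.val + j + 1))ᴴ) a c else 0) n]
    refine Finset.sum_congr rfl fun j _ => ?_
    simp only [Matrix.conjTranspose_apply, hH₀]
    by_cases h1 : i.val + j.val + 1 ≤ n <;> by_cases h2 : k.val + j.val + 1 ≤ n <;>
      simp [h1, h2, Matrix.mul_apply, Matrix.conjTranspose_apply]
  have entryGG : ∀ (i k : Fin n) (a c : Fin p),
      (G * Gᴴ) (i, a) (k, c) = ∑ u ∈ Finset.range n,
        if (u < i.val ∧ u < k.val)
          then (B (i.val - u) * (B (k.val - u))ᴴ) a c else 0 := by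
    intro i k a c
    rw [Matrix.mul_apply, Fintype.sum_prod_type,
      ← Fin.sum_univ_eq_sum_range (fun u => if (u < i.val ∧ u < k.val)
        then (B (i.val - u) * (B (k.val - u))ᴴ) a c else 0) n]
    refine Finset.sum_congr rfl fun u _ => ?_
    simp only [Matrix.conjTranspose_apply]; simp only [hG]
    by_cases h1 : u.val < i.val <;> by_cases h2 : u.val < k.val <;>
      simp [h1, h2, Matrix.mul_apply, Matrix.conjTranspose_apply]
  have main : ∀ (i k : Fin n) (a c : Fin p), i.val ≤ k.val →
      ((1 - H₀ * H₀ᴴ : Matrix (Fin n × Fin p) (Fin n × Fin p) ℂ) (i, a)) (k, c)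
        = (G * Gᴴ) (i, a) (k, c) := by
    intro i k a c h
    have hkn : k.val < n := k.isLt
    set d := k.val - i.val with hdd
    have KF := key_fourier p m n B hcoiso d (by omega) a c
    rw [show n - d = i.val + (n - k.val) from by omega, Finset.sum_range_add] at KF
    have KF2 : (∑ s ∈ Finset.range i.val, (B (s+1) * (B (s+1+d))ᴴ) a c)
        + ∑ x ∈ Finset.range (n - k.val), (B (i.val + x + 1) * (B (k.val + x + 1))ᴴ) a c
        = if d = 0 then (1 : Matrix (Fin p) (Fin p) ℂ) a c else 0 := by
      rw [← KF]
      congr 1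
      refine Finset.sum_congr rfl fun x hx => ?_
      rw [show i.val + x + 1 = i.val + x + 1 from rfl, show (i.val + x) + 1 + d = k.val + x + 1 from by omega]
    have SH : (∑ j ∈ Finset.range n,
        if (i.val + j + 1 ≤ n ∧ k.val + j + 1 ≤ n)
          then (B (i.val + j + 1) * (B (k.val + j + 1))ᴴ) a c else 0)
        = ∑ x ∈ Finset.range (n - k.val), (B (i.val + x + 1) * (B (k.val + x + 1))ᴴ) a c := by
      rw [← Finset.sum_subset (Finset.range_subset_range.mpr (by omega : n - k.val ≤ n))
        (fun j _ hj => by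
          rw [Finset.mem_range] at hj
          rw [if_neg]
          omega)]
      refine Finset.sum_congr rfl fun x hx => ?_
      rw [Finset.mem_range] at hx
      rw [if_pos (by omega)]
    have SG : (∑ u ∈ Finset.range n,
        if (u < i.val ∧ u < k.val)
          then (B (i.val - u) * (B (k.val - u))ᴴ) a c else 0)
        = ∑ s ∈ Finset.range i.val, (B (s+1) * (B (s+1+d))ᴴ) a c := by
      rw [← Finset.sum_subset (Finset.range_subset_range.mpr (by omega : i.val ≤ n))
        (fun u _ hu => by
          rw [Finset.mem_range] at hu
          rw [if_neg]
          omega)]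
      rw [← Finset.sum_range_reflect]
      refine Finset.sum_congr rfl fun s hs => ?_
      rw [Finset.mem_range] at hs
      rw [if_pos (by omega), show i.val - (i.val - 1 - s) = s + 1 from by omega,
        show k.val - (i.val - 1 - s) = s + 1 + d from by omega]
    have h1 : (1 : Matrix (Fin n × Fin p) (Fin n × Fin p) ℂ) (i, a) (k, c)
        = if d = 0 then (1 : Matrix (Fin p) (Fin p) ℂ) a c else 0 := by
      simp only [Matrix.one_apply, Prod.mk.injEq]
      by_cases hd0 : d = 0
      · have hik : i = k := Fin.ext (by omega)
        by_cases hac : a = c <;> simp [hik, hac, hd0]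
      · have : ¬(i = k ∧ a = c) := by
          rintro ⟨rfl, -⟩; omega
        simp [this, hd0]
    rw [Matrix.sub_apply, entryHH, entryGG, h1, SH, SG, ← KF2]
    ring
  have key : 1 - H₀ * H₀ᴴ = G * Gᴴ := by
    have hherm1 : (1 - H₀ * H₀ᴴ).IsHermitian :=
      Matrix.isHermitian_one.sub (Matrix.isHermitian_mul_conjTranspose_self H₀)
    have hherm2 : (G * Gᴴ).IsHermitian := Matrix.isHermitian_mul_conjTranspose_self G
    ext ⟨i, a⟩ ⟨k, c⟩
    rcases le_total i.val k.val with h | h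
    · exact main i k a c h
    · rw [← hherm1.apply, ← hherm2.apply, main k i c a h]
  refine ⟨?_, ?_, ?_⟩
  · rw [key]; exact Matrix.posSemidef_self_mul_conjTranspose G
  · rw [sub_sub_cancel]; exact Matrix.posSemidef_self_mul_conjTranspose H₀
  · intro j k b c hjk
    rw [key, entryGG]
    refine Finset.sum_eq_zero fun u hu => ?_
    rw [if_neg]
    omega
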